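/- For 1/4 < β < 1/3, let D₈(β) be the octagon with vertices v₁ = (β, -2), v₂ = (1+β, -2), v₃ = (1-β, 0), v₄ = (β, 1), v₅ = -v₁, ..., v₈ = -v₄. Then D₈(β) + ℤ² is a five-fold lattice tiling of ℝ². -/

import Mathlib

/-- `K + X` is a `k`-fold tiling of the plane. -/
def IsKFoldTiling (K X : Set (ℝ × ℝ)) (k : ℕ) : Prop :=
  (∀ y : ℝ × ℝ, ∃ S : Finset (ℝ × ℝ), ↑S ⊆ {x ∈ X | y - x ∈ K} ∧ k ≤ S.card) ∧
  (∀ y : ℝ × ℝ, ∀ S : Finset (ℝ × ℝ), ↑S ⊆ {x ∈ X | y - x ∈ interior K} → S.card ≤ k)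

/-- The integer lattice `ℤ²` inside `ℝ²`. -/
def intLattice : Set (ℝ × ℝ) := {p | ∃ m n : ℤ, p = ((m : ℝ), (n : ℝ))}

/-- The octagon `D₈(β)` with vertices `(β,-2), (1+β,-2), (1-β,0), (β,1)`
and their negatives. -/
noncomputable def D₈β (β : ℝ) : Set (ℝ × ℝ) :=
  convexHull ℝ {(β, -(2:ℝ)), (1 + β, -(2:ℝ)), (1 - β, (0:ℝ)), (β, (1:ℝ)),
    (-β, (2:ℝ)), (-1 - β, (2:ℝ)), (β - 1, (0:ℝ)), (-β, -(1:ℝ))}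

lemma seg_mem {s : Set (ℝ×ℝ)} (hs : Convex ℝ s) {A B : ℝ×ℝ} (hA : A ∈ s) (hB : B ∈ s)
    {x t : ℝ} (h2 : A.2 = t) (h2' : B.2 = t) (hAB : A.1 < B.1) (hx1 : A.1 ≤ x)
    (hx2 : x ≤ B.1) : ((x, t) : ℝ×ℝ) ∈ s := by
  have hne : B.1 - A.1 ≠ 0 := by linarith
  have h := hs hA hB (a := (B.1 - x)/(B.1 - A.1)) (b := (x - A.1)/(B.1 - A.1))
    (by apply div_nonneg <;> linarith) (by apply div_nonneg <;> linarith)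
    (by field_simp; ring)
  have he : ((B.1 - x)/(B.1 - A.1)) • A + ((x - A.1)/(B.1 - A.1)) • B = ((x, t) : ℝ×ℝ) := by
    ext <;> simp [Prod.smul_def, smul_eq_mul, h2, h2'] <;> field_simp <;> ring
  rwa [he] at h

lemma comb_mem {s : Set (ℝ×ℝ)} (hs : Convex ℝ s) {A B : ℝ×ℝ} (hA : A ∈ s) (hB : B ∈ s)
    {c : ℝ} (h0 : 0 ≤ c) (h1 : c ≤ 1) : (1-c) • A + c • B ∈ s :=
  hs hA hB (by linarith) h0 (by ring)

section
variable {β : ℝ} (h0 : 1/4 < β) (h1 : β < 1/3)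

lemma vmem (p : ℝ×ℝ) (hp : p ∈ ({(β, -(2:ℝ)), (1 + β, -(2:ℝ)), (1 - β, (0:ℝ)), (β, (1:ℝ)),
    (-β, (2:ℝ)), (-1 - β, (2:ℝ)), (β - 1, (0:ℝ)), (-β, -(1:ℝ))} : Set (ℝ×ℝ))) :
    p ∈ D₈β β := subset_convexHull ℝ _ hp

-- left boundary point for t ∈ [0,2]: (β-1-β*t, t), on edge v₇ v₆
lemma leftA (t : ℝ) (ht0 : 0 ≤ t) (ht2 : t ≤ 2) : ((β-1-β*t, t) : ℝ×ℝ) ∈ D₈β β := by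
  have h6 : ((-1 - β, (2:ℝ)) : ℝ×ℝ) ∈ D₈β β := vmem _ (by norm_num)
  have h7 : ((β - 1, (0:ℝ)) : ℝ×ℝ) ∈ D₈β β := vmem _ (by norm_num)
  have h := comb_mem (convex_convexHull ℝ _) h7 h6 (c := t/2) (by linarith) (by linarith)
  have he : (1 - t/2) • ((β - 1, (0:ℝ)) : ℝ×ℝ) + (t/2) • ((-1 - β, (2:ℝ)) : ℝ×ℝ)
      = ((β-1-β*t, t) : ℝ×ℝ) := by
    ext <;> simp [Prod.smul_def, smul_eq_mul] <;> ring
  rwa [he] at h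
end

section
variable {β : ℝ} (h0 : 1/4 < β) (h1 : β < 1/3)

lemma leftB (t : ℝ) (ht0 : -1 ≤ t) (ht2 : t ≤ 0) : ((β-1+(2*β-1)*t, t) : ℝ×ℝ) ∈ D₈β β := by
  have h7 : ((β - 1, (0:ℝ)) : ℝ×ℝ) ∈ D₈β β := vmem _ (by norm_num)
  have h8 : ((-β, -(1:ℝ)) : ℝ×ℝ) ∈ D₈β β := vmem _ (by norm_num)
  have h := comb_mem (convex_convexHull ℝ _) h7 h8 (c := -t) (by linarith) (by linarith)
  have he : (1 - (-t)) • ((β - 1, (0:ℝ)) : ℝ×ℝ) + (-t) • ((-β, -(1:ℝ)) : ℝ×ℝ)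
      = ((β-1+(2*β-1)*t, t) : ℝ×ℝ) := by
    ext <;> simp [Prod.smul_def, smul_eq_mul] <;> ring
  rwa [he] at h

lemma leftC (t : ℝ) (ht0 : -2 ≤ t) (ht2 : t ≤ -1) : ((-3*β-2*β*t, t) : ℝ×ℝ) ∈ D₈β β := by
  have h8 : ((-β, -(1:ℝ)) : ℝ×ℝ) ∈ D₈β β := vmem _ (by norm_num)
  have h9 : ((β, -(2:ℝ)) : ℝ×ℝ) ∈ D₈β β := vmem _ (by norm_num)
  have h := comb_mem (convex_convexHull ℝ _) h8 h9 (c := -t-1) (by linarith) (by linarith)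
  have he : (1 - (-t-1)) • ((-β, -(2:ℝ)+1) : ℝ×ℝ) + (-t-1) • ((β, -(2:ℝ)) : ℝ×ℝ)
      = ((-3*β-2*β*t, t) : ℝ×ℝ) := by
    ext <;> simp [Prod.smul_def, smul_eq_mul] <;> ring
  rw [show ((-β, -(2:ℝ)+1) : ℝ×ℝ) = ((-β, -(1:ℝ)) : ℝ×ℝ) by norm_num] at he
  rwa [he] at h

lemma rightA (t : ℝ) (ht0 : 0 ≤ t) (ht2 : t ≤ 1) : ((1-β+(2*β-1)*t, t) : ℝ×ℝ) ∈ D₈β β := by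
  have h3 : ((1 - β, (0:ℝ)) : ℝ×ℝ) ∈ D₈β β := vmem _ (by norm_num)
  have h4 : ((β, (1:ℝ)) : ℝ×ℝ) ∈ D₈β β := vmem _ (by norm_num)
  have h := comb_mem (convex_convexHull ℝ _) h3 h4 (c := t) (by linarith) (by linarith)
  have he : (1 - t) • ((1 - β, (0:ℝ)) : ℝ×ℝ) + t • ((β, (1:ℝ)) : ℝ×ℝ)
      = ((1-β+(2*β-1)*t, t) : ℝ×ℝ) := by
    ext <;> simp [Prod.smul_def, smul_eq_mul] <;> ring
  rwa [he] at h

lemma rightB (t : ℝ) (ht0 : 1 ≤ t) (ht2 : t ≤ 2) : ((3*β-2*β*t, t) : ℝ×ℝ) ∈ D₈β β := by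
  have h4 : ((β, (1:ℝ)) : ℝ×ℝ) ∈ D₈β β := vmem _ (by norm_num)
  have h5 : ((-β, (2:ℝ)) : ℝ×ℝ) ∈ D₈β β := vmem _ (by norm_num)
  have h := comb_mem (convex_convexHull ℝ _) h4 h5 (c := t-1) (by linarith) (by linarith)
  have he : (1 - (t-1)) • ((β, (1:ℝ)) : ℝ×ℝ) + (t-1) • ((-β, (2:ℝ)) : ℝ×ℝ)
      = ((3*β-2*β*t, t) : ℝ×ℝ) := by
    ext <;> simp [Prod.smul_def, smul_eq_mul] <;> ring
  rwa [he] at h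

lemma rightC (t : ℝ) (ht0 : -2 ≤ t) (ht2 : t ≤ 0) : ((1-β-β*t, t) : ℝ×ℝ) ∈ D₈β β := by
  have h2 : ((1 + β, -(2:ℝ)) : ℝ×ℝ) ∈ D₈β β := vmem _ (by norm_num)
  have h3 : ((1 - β, (0:ℝ)) : ℝ×ℝ) ∈ D₈β β := vmem _ (by norm_num)
  have h := comb_mem (convex_convexHull ℝ _) h2 h3 (c := (t+2)/2) (by linarith) (by linarith)
  have he : (1 - (t+2)/2) • ((1 + β, -(2:ℝ)) : ℝ×ℝ) + ((t+2)/2) • ((1 - β, (0:ℝ)) : ℝ×ℝ)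
      = ((1-β-β*t, t) : ℝ×ℝ) := by
    ext <;> simp [Prod.smul_def, smul_eq_mul] <;> ring
  rwa [he] at h

include h0 h1

lemma sec1 {x t : ℝ} (ht0 : 0 ≤ t) (ht2 : t ≤ 1) (hx1 : β-1-β*t ≤ x)
    (hx2 : x ≤ 1-β+(2*β-1)*t) : ((x, t) : ℝ×ℝ) ∈ D₈β β :=
  seg_mem (convex_convexHull ℝ _) (leftA t ht0 (by linarith)) (rightA t ht0 ht2)
    rfl rfl (by dsimp; nlinarith [(1-t)*(1-3*β)]) hx1 hx2

lemma sec2 {x t : ℝ} (ht0 : 1 ≤ t) (ht2 : t ≤ 2) (hx1 : β-1-β*t ≤ x)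
    (hx2 : x ≤ 3*β-2*β*t) : ((x, t) : ℝ×ℝ) ∈ D₈β β :=
  seg_mem (convex_convexHull ℝ _) (leftA t (by linarith) ht2) (rightB t ht0 ht2)
    rfl rfl (by dsimp; nlinarith) hx1 hx2

lemma sec3 {x t : ℝ} (ht0 : -1 ≤ t) (ht2 : t ≤ 0) (hx1 : β-1+(2*β-1)*t ≤ x)
    (hx2 : x ≤ 1-β-β*t) : ((x, t) : ℝ×ℝ) ∈ D₈β β :=
  seg_mem (convex_convexHull ℝ _) (leftB t ht0 ht2) (rightC t (by linarith) ht2)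
    rfl rfl (by dsimp; nlinarith [(1+t)*(1-3*β)]) hx1 hx2

lemma sec4 {x t : ℝ} (ht0 : -2 ≤ t) (ht2 : t ≤ -1) (hx1 : -3*β-2*β*t ≤ x)
    (hx2 : x ≤ 1-β-β*t) : ((x, t) : ℝ×ℝ) ∈ D₈β β :=
  seg_mem (convex_convexHull ℝ _) (leftC t ht0 ht2) (rightC t ht0 (by linarith))
    rfl rfl (by dsimp; nlinarith) hx1 hx2

end

lemma D_le {β a b c : ℝ} (hv : ∀ p ∈ ({(β, -(2:ℝ)), (1 + β, -(2:ℝ)), (1 - β, (0:ℝ)), (β, (1:ℝ)),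
    (-β, (2:ℝ)), (-1 - β, (2:ℝ)), (β - 1, (0:ℝ)), (-β, -(1:ℝ))} : Set (ℝ×ℝ)),
    a*p.1 + b*p.2 ≤ c) :
    ∀ q ∈ D₈β β, a*q.1 + b*q.2 ≤ c := by
  intro q hq
  have hlin : IsLinearMap ℝ (fun p : ℝ×ℝ => a*p.1 + b*p.2) := by
    constructor
    · intro p q; simp [Prod.fst_add, Prod.snd_add]; ring
    · intro r p; simp [smul_eq_mul]; ring
  exact convexHull_min hv (convex_halfSpace_le hlin c) hq

lemma int_strict {β a b c da db : ℝ} (hd : 0 < a*da + b*db)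
    (hle : ∀ q ∈ D₈β β, a*q.1 + b*q.2 ≤ c) {p : ℝ×ℝ}
    (hp : p ∈ interior (D₈β β)) : a*p.1 + b*p.2 < c := by
  rw [mem_interior_iff_mem_nhds, Metric.mem_nhds_iff] at hp
  obtain ⟨ε, hε, hball⟩ := hp
  set δ := ε/(2*(|da|+|db|)+2) with hδ
  have hda : 0 ≤ |da| := abs_nonneg da
  have hdb : 0 ≤ |db| := abs_nonneg db
  have hδpos : 0 < δ := by positivity
  have hq : ((p.1 + δ*da, p.2 + δ*db) : ℝ×ℝ) ∈ D₈β β := by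
    apply hball
    simp only [Metric.mem_ball, Prod.dist_eq, Real.dist_eq]
    have h1 : |p.1 + δ*da - p.1| = δ*|da| := by
      rw [show p.1 + δ*da - p.1 = δ*da by ring, abs_mul, abs_of_pos hδpos]
    have h2 : |p.2 + δ*db - p.2| = δ*|db| := by
      rw [show p.2 + δ*db - p.2 = δ*db by ring, abs_mul, abs_of_pos hδpos]
    rw [h1, h2]
    have : δ*(|da|+|db|) < ε := by
      rw [hδ]
      rw [div_mul_eq_mul_div, div_lt_iff₀ (by positivity)]
      nlinarith
    apply max_lt <;> nlinarith
  have := hle _ hq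
  simp only at this
  nlinarith

lemma interior_strict8 {β : ℝ} (h0 : 1/4 < β) (h1 : β < 1/3) {p : ℝ×ℝ}
    (hp : p ∈ interior (D₈β β)) :
    (-2 < p.2 ∧ p.2 < 2) ∧ (β-1-β*p.2 < p.1 ∧ p.1 < 1-β-β*p.2) ∧
    (β-1+(2*β-1)*p.2 < p.1 ∧ p.1 < 1-β+(2*β-1)*p.2) ∧
    (-3*β-2*β*p.2 < p.1 ∧ p.1 < 3*β-2*β*p.2) := by
  have V : ∀ (a b c : ℝ), (a*β + b*(-2) ≤ c) → (a*(1+β) + b*(-2) ≤ c) →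
      (a*(1-β) ≤ c) → (a*β + b ≤ c) → (a*(-β) + b*2 ≤ c) → (a*(-1-β) + b*2 ≤ c) →
      (a*(β-1) ≤ c) → (a*(-β) + b*(-1) ≤ c) → ∀ q ∈ D₈β β, a*q.1 + b*q.2 ≤ c := by
    intro a b c hc1 hc2 hc3 hc4 hc5 hc6 hc7 hc8
    apply D_le
    intro q hq
    simp only [Set.mem_insert_iff, Set.mem_singleton_iff] at hq
    rcases hq with rfl|rfl|rfl|rfl|rfl|rfl|rfl|rfl <;> simp <;> linarith
  refine ⟨⟨?_, ?_⟩, ⟨?_, ?_⟩, ⟨?_, ?_⟩, ⟨?_, ?_⟩⟩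
  · have := int_strict (a := 0) (b := -1) (c := 2) (da := 0) (db := -1) (by norm_num)
      (V 0 (-1) 2 (by linarith) (by linarith) (by linarith) (by linarith) (by linarith)
        (by linarith) (by linarith) (by linarith)) hp
    linarith
  · have := int_strict (a := 0) (b := 1) (c := 2) (da := 0) (db := 1) (by norm_num)
      (V 0 1 2 (by linarith) (by linarith) (by linarith) (by linarith) (by linarith)
        (by linarith) (by linarith) (by linarith)) hp
    linarith
  · have := int_strict (a := -1) (b := -β) (c := 1-β) (da := -1) (db := 0) (by norm_num)
      (V (-1) (-β) (1-β) (by nlinarith) (by nlinarith) (by nlinarith) (by nlinarith)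
        (by nlinarith) (by nlinarith) (by nlinarith) (by nlinarith)) hp
    nlinarith
  · have := int_strict (a := 1) (b := β) (c := 1-β) (da := 1) (db := 0) (by norm_num)
      (V 1 β (1-β) (by nlinarith) (by nlinarith) (by nlinarith) (by nlinarith)
        (by nlinarith) (by nlinarith) (by nlinarith) (by nlinarith)) hp
    nlinarith
  · have := int_strict (a := -1) (b := (2*β-1)) (c := 1-β) (da := -1) (db := 0) (by norm_num)
      (V (-1) (2*β-1) (1-β) (by nlinarith) (by nlinarith) (by nlinarith) (by nlinarith)
        (by nlinarith) (by nlinarith) (by nlinarith) (by nlinarith)) hp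
    nlinarith
  · have := int_strict (a := 1) (b := -(2*β-1)) (c := 1-β) (da := 1) (db := 0) (by norm_num)
      (V 1 (-(2*β-1)) (1-β) (by nlinarith) (by nlinarith) (by nlinarith) (by nlinarith)
        (by nlinarith) (by nlinarith) (by nlinarith) (by nlinarith)) hp
    nlinarith
  · have := int_strict (a := -1) (b := -2*β) (c := 3*β) (da := -1) (db := 0) (by norm_num)
      (V (-1) (-2*β) (3*β) (by nlinarith) (by nlinarith) (by nlinarith) (by nlinarith)
        (by nlinarith) (by nlinarith) (by nlinarith) (by nlinarith)) hp
    nlinarith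
  · have := int_strict (a := 1) (b := 2*β) (c := 3*β) (da := 1) (db := 0) (by norm_num)
      (V 1 (2*β) (3*β) (by nlinarith) (by nlinarith) (by nlinarith) (by nlinarith)
        (by nlinarith) (by nlinarith) (by nlinarith) (by nlinarith)) hp
    nlinarith

lemma castpair_inj : Function.Injective (fun p : ℤ×ℤ => (((p.1:ℝ), (p.2:ℝ)) : ℝ×ℝ)) := by
  intro p q h
  simp only [Prod.mk.injEq, Int.cast_inj] at h
  exact Prod.ext h.1 h.2

lemma finish5 {β u v : ℝ} (p₀ p₁ p₂ p₃ p₄ : ℤ×ℤ)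
    (h₀ : (u - (p₀.1:ℝ), v - (p₀.2:ℝ)) ∈ D₈β β)
    (h₁ : (u - (p₁.1:ℝ), v - (p₁.2:ℝ)) ∈ D₈β β)
    (h₂ : (u - (p₂.1:ℝ), v - (p₂.2:ℝ)) ∈ D₈β β)
    (h₃ : (u - (p₃.1:ℝ), v - (p₃.2:ℝ)) ∈ D₈β β)
    (h₄ : (u - (p₄.1:ℝ), v - (p₄.2:ℝ)) ∈ D₈β β)
    (hcard : ({p₀,p₁,p₂,p₃,p₄} : Finset (ℤ×ℤ)).card = 5) :
    ∃ S : Finset (ℝ×ℝ), ↑S ⊆ {x ∈ intLattice | ((u,v) : ℝ×ℝ) - x ∈ D₈β β} ∧ 5 ≤ S.card := by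
  classical
  refine ⟨({p₀,p₁,p₂,p₃,p₄} : Finset (ℤ×ℤ)).image (fun p => ((p.1:ℝ), (p.2:ℝ))), ?_, ?_⟩
  · intro z hz
    simp only [Finset.coe_image, Set.mem_image, Finset.mem_coe, Finset.mem_insert,
      Finset.mem_singleton] at hz
    obtain ⟨p, hp, rfl⟩ := hz
    have hD : (u - (p.1:ℝ), v - (p.2:ℝ)) ∈ D₈β β := by
      rcases hp with rfl|rfl|rfl|rfl|rfl <;> assumption
    exact ⟨⟨p.1, p.2, rfl⟩, hD⟩
  · rw [Finset.card_image_of_injective _ castpair_inj, hcard]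

set_option maxHeartbeats 2000000 in
lemma lower {β : ℝ} (h0 : 1/4 < β) (h1 : β < 1/3) (y : ℝ×ℝ) :
    ∃ S : Finset (ℝ×ℝ), ↑S ⊆ {x ∈ intLattice | y - x ∈ D₈β β} ∧ 5 ≤ S.card := by
  obtain ⟨u, v⟩ := y
  have hb0 : (0:ℝ) < β := by linarith
  set n₀ : ℤ := ⌊v⌋ with hn₀def
  set w : ℝ := Int.fract v with hwdef
  have hw0 : 0 ≤ w := Int.fract_nonneg v
  have hw1 : w < 1 := Int.fract_lt_one v
  have hn : (n₀:ℝ) + w = v := Int.floor_add_fract v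
  set a : ℝ := β - 1 - β*w with ha
  set k : ℤ := ⌊u - a⌋ with hkdef
  set f : ℝ := Int.fract (u - a) with hfdef
  have hf0 : 0 ≤ f := Int.fract_nonneg _
  have hf1 : f < 1 := Int.fract_lt_one _
  have hk : (k:ℝ) + f = u - a := Int.floor_add_fract _
  have hbw0 : 0 ≤ β*w := by positivity
  have hbw1 : β*w < 1 := by nlinarith
  have h3bw : 0 ≤ (1-w)*(1-3*β) := by nlinarith
  have h3bw' : 0 ≤ w*(1-3*β) := by nlinarith
  -- membership proofs
  have M0 : (u - ((k:ℤ):ℝ), v - ((n₀:ℤ):ℝ)) ∈ D₈β β := by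
    rw [show u - ((k:ℤ):ℝ) = a + f by push_cast; linarith,
        show v - ((n₀:ℤ):ℝ) = w by push_cast; linarith]
    exact sec1 h0 h1 hw0 (by linarith) (by linarith) (by nlinarith)
  have M4 : (u - ((k-1:ℤ):ℝ), v - ((n₀+2:ℤ):ℝ)) ∈ D₈β β := by
    rw [show u - ((k-1:ℤ):ℝ) = a + f + 1 by push_cast; linarith,
        show v - ((n₀+2:ℤ):ℝ) = w - 2 by push_cast; linarith]
    exact sec4 h0 h1 (by linarith) (by linarith) (by nlinarith) (by nlinarith)
  have M1a : f + 1 ≤ 2-2*β+(3*β-1)*w → (u - ((k-1:ℤ):ℝ), v - ((n₀:ℤ):ℝ)) ∈ D₈β β := by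
    intro hc
    rw [show u - ((k-1:ℤ):ℝ) = a + f + 1 by push_cast; linarith,
        show v - ((n₀:ℤ):ℝ) = w by push_cast; linarith]
    exact sec1 h0 h1 hw0 (by linarith) (by nlinarith) (by nlinarith)
  have M1b : ¬(f + 1 ≤ 2-2*β+(3*β-1)*w) → (u - ((k:ℤ):ℝ), v - ((n₀+1:ℤ):ℝ)) ∈ D₈β β := by
    intro hc
    push_neg at hc
    rw [show u - ((k:ℤ):ℝ) = a + f by push_cast; linarith,
        show v - ((n₀+1:ℤ):ℝ) = w - 1 by push_cast; linarith]
    exact sec3 h0 h1 (by linarith) (by linarith) (by nlinarith) (by nlinarith)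
  have M2a : f ≤ 1-β → (u - ((k-1:ℤ):ℝ), v - ((n₀+1:ℤ):ℝ)) ∈ D₈β β := by
    intro hc
    rw [show u - ((k-1:ℤ):ℝ) = a + f + 1 by push_cast; linarith,
        show v - ((n₀+1:ℤ):ℝ) = w - 1 by push_cast; linarith]
    exact sec3 h0 h1 (by linarith) (by linarith) (by nlinarith) (by nlinarith)
  have M2b : ¬(f ≤ 1-β) → (u - ((k+1:ℤ):ℝ), v - ((n₀-1:ℤ):ℝ)) ∈ D₈β β := by
    intro hc
    push_neg at hc
    rw [show u - ((k+1:ℤ):ℝ) = a + f - 1 by push_cast; linarith,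
        show v - ((n₀-1:ℤ):ℝ) = w + 1 by push_cast; linarith]
    exact sec2 h0 h1 (by linarith) (by linarith) (by nlinarith) (by nlinarith)
  have M3a : f ≤ 1-β*w → (u - ((k:ℤ):ℝ), v - ((n₀-1:ℤ):ℝ)) ∈ D₈β β := by
    intro hc
    rw [show u - ((k:ℤ):ℝ) = a + f by push_cast; linarith,
        show v - ((n₀-1:ℤ):ℝ) = w + 1 by push_cast; linarith]
    exact sec2 h0 h1 (by linarith) (by linarith) (by nlinarith) (by nlinarith)
  have M3b : ¬(f ≤ 1-β*w) → (u - ((k:ℤ):ℝ), v - ((n₀+2:ℤ):ℝ)) ∈ D₈β β := by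
    intro hc
    push_neg at hc
    rw [show u - ((k:ℤ):ℝ) = a + f by push_cast; linarith,
        show v - ((n₀+2:ℤ):ℝ) = w - 2 by push_cast; linarith]
    exact sec4 h0 h1 (by linarith) (by linarith) (by nlinarith) (by nlinarith)
  by_cases hc1 : f + 1 ≤ 2-2*β+(3*β-1)*w <;> by_cases hc2 : f ≤ 1-β <;>
    by_cases hc3 : f ≤ 1-β*w
  · exact finish5 (k,n₀) (k-1,n₀) (k-1,n₀+1) (k,n₀-1) (k-1,n₀+2) M0 (M1a hc1) (M2a hc2)
      (M3a hc3) M4 (by (repeat rw [Finset.card_insert_of_notMem (by simp [Prod.ext_iff] <;> omega)]); rfl)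
  · exact finish5 (k,n₀) (k-1,n₀) (k-1,n₀+1) (k,n₀+2) (k-1,n₀+2) M0 (M1a hc1) (M2a hc2)
      (M3b hc3) M4 (by (repeat rw [Finset.card_insert_of_notMem (by simp [Prod.ext_iff] <;> omega)]); rfl)
  · exact finish5 (k,n₀) (k-1,n₀) (k+1,n₀-1) (k,n₀-1) (k-1,n₀+2) M0 (M1a hc1) (M2b hc2)
      (M3a hc3) M4 (by (repeat rw [Finset.card_insert_of_notMem (by simp [Prod.ext_iff] <;> omega)]); rfl)
  · exact finish5 (k,n₀) (k-1,n₀) (k+1,n₀-1) (k,n₀+2) (k-1,n₀+2) M0 (M1a hc1) (M2b hc2)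
      (M3b hc3) M4 (by (repeat rw [Finset.card_insert_of_notMem (by simp [Prod.ext_iff] <;> omega)]); rfl)
  · exact finish5 (k,n₀) (k,n₀+1) (k-1,n₀+1) (k,n₀-1) (k-1,n₀+2) M0 (M1b hc1) (M2a hc2)
      (M3a hc3) M4 (by (repeat rw [Finset.card_insert_of_notMem (by simp [Prod.ext_iff] <;> omega)]); rfl)
  · exact finish5 (k,n₀) (k,n₀+1) (k-1,n₀+1) (k,n₀+2) (k-1,n₀+2) M0 (M1b hc1) (M2a hc2)
      (M3b hc3) M4 (by (repeat rw [Finset.card_insert_of_notMem (by simp [Prod.ext_iff] <;> omega)]); rfl)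
  · exact finish5 (k,n₀) (k,n₀+1) (k+1,n₀-1) (k,n₀-1) (k-1,n₀+2) M0 (M1b hc1) (M2b hc2)
      (M3a hc3) M4 (by (repeat rw [Finset.card_insert_of_notMem (by simp [Prod.ext_iff] <;> omega)]); rfl)
  · exact finish5 (k,n₀) (k,n₀+1) (k+1,n₀-1) (k,n₀+2) (k-1,n₀+2) M0 (M1b hc1) (M2b hc2)
      (M3b hc3) M4 (by (repeat rw [Finset.card_insert_of_notMem (by simp [Prod.ext_iff] <;> omega)]); rfl)

set_option maxHeartbeats 2000000 in
lemma upper {β : ℝ} (h0 : 1/4 < β) (h1 : β < 1/3) (y : ℝ×ℝ) (S : Finset (ℝ×ℝ))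
    (hS : ↑S ⊆ {x ∈ intLattice | y - x ∈ interior (D₈β β)}) : S.card ≤ 5 := by
  classical
  obtain ⟨u, v⟩ := y
  have hb0 : (0:ℝ) < β := by linarith
  set n₀ : ℤ := ⌊v⌋ with hn₀def
  set w : ℝ := Int.fract v with hwdef
  have hw0 : 0 ≤ w := Int.fract_nonneg v
  have hw1 : w < 1 := Int.fract_lt_one v
  have hn : (n₀:ℝ) + w = v := Int.floor_add_fract v
  set a : ℝ := β - 1 - β*w with ha
  set L : ℝ := 2-2*β+(3*β-1)*w with hL
  set k : ℤ := ⌊u - a⌋ with hkdef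
  have hbw0 : 0 ≤ β*w := by positivity
  have hbw1 : β*w < 1 := by nlinarith
  have hLa : L ≤ 3-β := by nlinarith
  have hLb : (3:ℝ)-β ≤ 4 - β*w := by nlinarith
  have hL0 : 1 ≤ L := by nlinarith
  have key : ∀ z ∈ S, ∃ m n : ℤ, z = ((m:ℝ), (n:ℝ)) ∧
      ((n = n₀ ∧ a < u - m ∧ u - m < a + L) ∨
       (n = n₀+1 ∧ a + L < u - m + 1 ∧ u - m + 1 < a + 3 - β) ∨
       (n = n₀-1 ∧ a + 3 - β < u - m + 3 ∧ u - m + 3 < a + 4 - β*w) ∨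
       (n = n₀+2 ∧ a + 4 - β*w < u - m + 3 ∧ u - m + 3 < a + 5)) := by
    intro z hz
    obtain ⟨⟨m, n, rfl⟩, hint⟩ := hS hz
    refine ⟨m, n, rfl, ?_⟩
    have h8 := interior_strict8 h0 h1 hint
    simp only [Prod.mk_sub_mk] at h8
    obtain ⟨⟨hy1, hy2⟩, ⟨hx1, hx2⟩, ⟨hx3, hx4⟩, ⟨hx5, hx6⟩⟩ := h8
    have hn1' : n ≤ n₀ + 2 := by
      have : (n:ℝ) < ((n₀+3:ℤ):ℝ) := by push_cast; linarith
      have := Int.cast_lt.mp this; omega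
    have hn2' : n₀ - 1 ≤ n := by
      have : ((n₀-2:ℤ):ℝ) < (n:ℝ) := by push_cast; linarith
      have := Int.cast_lt.mp this; omega
    have hcases : n = n₀ ∨ n = n₀+1 ∨ n = n₀-1 ∨ n = n₀+2 := by omega
    have hvn : (n:ℝ) = (n₀:ℝ) + (n - n₀ : ℤ) := by push_cast; ring
    rcases hcases with rfl|rfl|rfl|rfl
    · have e : v - ((n₀:ℤ):ℝ) = w := by linarith
      rw [e] at hx1 hx4
      exact Or.inl ⟨rfl, by nlinarith, by nlinarith⟩
    · have e : v - ((n₀+1:ℤ):ℝ) = w - 1 := by push_cast; linarith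
      rw [e] at hx3 hx2
      exact Or.inr (Or.inl ⟨rfl, by nlinarith, by nlinarith⟩)
    · have e : v - ((n₀-1:ℤ):ℝ) = w + 1 := by push_cast; linarith
      rw [e] at hx1 hx6
      exact Or.inr (Or.inr (Or.inl ⟨rfl, by nlinarith, by nlinarith⟩))
    · have e : v - ((n₀+2:ℤ):ℝ) = w - 2 := by push_cast; linarith
      rw [e] at hx5 hx2
      exact Or.inr (Or.inr (Or.inr ⟨rfl, by nlinarith, by nlinarith⟩))
  set F : ℝ×ℝ → ℝ := fun z => z.1 + (if z.2 = (n₀:ℝ)+1 then -1 else if z.2 = (n₀:ℝ) then 0 else -3)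
    with hF
  have hFval : ∀ (m n : ℤ), F ((m:ℝ), (n:ℝ)) =
      (m:ℝ) + (if n = n₀+1 then -1 else if n = n₀ then 0 else -3) := by
    intro m n
    simp only [hF]
    congr 1
    by_cases h : n = n₀+1
    · rw [if_pos (by push_cast [h]; ring), if_pos h]
    · have hr : ¬((n:ℝ) = (n₀:ℝ)+1) := by
        intro hc
        exact h (by exact_mod_cast (show (n:ℝ) = ((n₀+1:ℤ):ℝ) by push_cast; linarith))
      rw [if_neg hr, if_neg h]
      by_cases h' : n = n₀
      · rw [if_pos (by exact_mod_cast h'), if_pos h']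
      · rw [if_neg (fun hc => h' (by exact_mod_cast hc)), if_neg h']
  have hmaps : ∀ z ∈ S, F z ∈ (Finset.Icc (k-4) k).image (fun i : ℤ => (i:ℝ)) := by
    intro z hz
    obtain ⟨m, n, rfl, hd⟩ := key z hz
    have hfl : (k:ℝ) ≤ u - a := Int.floor_le _
    have hfl2 : u - a < (k:ℝ) + 1 := Int.lt_floor_add_one _
    simp only [Finset.mem_image, Finset.mem_Icc]
    have main : ∃ j : ℤ, F ((m:ℝ), (n:ℝ)) = (j:ℝ) ∧ u - a - 5 < (j:ℝ) ∧ (j:ℝ) ≤ u - a := by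
      rcases hd with ⟨rfl, hb1, hb2⟩|⟨rfl, hb1, hb2⟩|⟨rfl, hb1, hb2⟩|⟨rfl, hb1, hb2⟩ <;>
        rw [hFval] <;> split_ifs <;> try (exfalso; omega)
      · exact ⟨m, by push_cast; ring, by nlinarith, by nlinarith⟩
      · exact ⟨m-1, by push_cast; ring, by push_cast; nlinarith, by push_cast; nlinarith⟩
      · exact ⟨m-3, by push_cast; ring, by push_cast; nlinarith, by push_cast; nlinarith⟩
      · exact ⟨m-3, by push_cast; ring, by push_cast; nlinarith, by push_cast; nlinarith⟩
    obtain ⟨j, hj, hj1, hj2⟩ := main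
    refine ⟨j, ⟨?_, ?_⟩, hj.symm⟩
    · have h5 : ((k-5:ℤ):ℝ) < (j:ℝ) := by push_cast; linarith
      have := Int.cast_lt.mp h5; omega
    · exact Int.le_floor.mpr hj2
  have hinj : Set.InjOn F ↑S := by
    intro z hz z' hz' hFe
    obtain ⟨m, n, rfl, hd⟩ := key z hz
    obtain ⟨m', n', rfl, hd'⟩ := key z' hz'
    rcases hd with ⟨rfl, hb1, hb2⟩|⟨rfl, hb1, hb2⟩|⟨rfl, hb1, hb2⟩|⟨rfl, hb1, hb2⟩ <;>
      rcases hd' with ⟨rfl, hc1, hc2⟩|⟨rfl, hc1, hc2⟩|⟨rfl, hc1, hc2⟩|⟨rfl, hc1, hc2⟩ <;>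
      rw [hFval m, hFval m'] at hFe <;>
      split_ifs at hFe <;> (try (exfalso; omega)) <;> push_cast at hFe <;>
      try (exfalso; linarith)
    all_goals
      have hmm : m = m' := by
        have : (m:ℝ) = (m':ℝ) := by linarith
        exact_mod_cast this
    all_goals (subst hmm; rfl)
  calc S.card ≤ ((Finset.Icc (k-4) k).image (fun i : ℤ => (i:ℝ))).card :=
        Finset.card_le_card_of_injOn F hmaps hinj
    _ ≤ (Finset.Icc (k-4) k).card := Finset.card_image_le
    _ ≤ 5 := by rw [Int.card_Icc]; simp

/-- For `1/4 < β < 1/3`, `D₈(β) + ℤ²` is a five-fold lattice tiling of the plane. -/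
theorem D₈β_fivefold_lattice_tiling (β : ℝ) (h0 : 1/4 < β) (h1 : β < 1/3) :
    IsKFoldTiling (D₈β β) intLattice 5 := by
  exact ⟨fun y => lower h0 h1 y, fun y S hS => upper h0 h1 y S hS⟩
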